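/- Under the distributed adversarial daemon, every execution of the maximal matching algorithm is finite, i.e., the algorithm always terminates in a stable configuration. -/

import Mathlib

set_option linter.unusedSectionVars false


structure Config (V : Type*) where
  p : V → Option V
  m : V → Bool

variable {V : Type*}

def PRmarried (G : SimpleGraph V) (p : V → Option V) (i : V) : Prop :=
  ∃ j, G.Adj i j ∧ p i = some j ∧ p j = some i

def PRwaiting (G : SimpleGraph V) (p : V → Option V) (i : V) : Prop :=
  ∃ j, G.Adj i j ∧ p i = some j ∧ p j ≠ some i ∧ ¬ PRmarried G p j

def PRcondemned (G : SimpleGraph V) (p : V → Option V) (i : V) : Prop :=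
  ∃ j, G.Adj i j ∧ p i = some j ∧ p j ≠ some i ∧ PRmarried G p j

def PRdead (G : SimpleGraph V) (p : V → Option V) (i : V) : Prop :=
  p i = none ∧ ∀ j, G.Adj i j → PRmarried G p j

def PRfree (G : SimpleGraph V) (p : V → Option V) (i : V) : Prop :=
  p i = none ∧ ∃ j, G.Adj i j ∧ ¬ PRmarried G p j

def Valid (G : SimpleGraph V) (C : Config V) : Prop :=
  ∀ i j, C.p i = some j → G.Adj i j

section Rules
variable [LinearOrder V]

def UpdateEnabled (G : SimpleGraph V) (C : Config V) (i : V) : Prop :=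
  ¬ (C.m i = true ↔ PRmarried G C.p i)

def MarriageEnabled (G : SimpleGraph V) (C : Config V) (i : V) : Prop :=
  (C.m i = true ↔ PRmarried G C.p i) ∧ C.p i = none ∧ ∃ j, G.Adj i j ∧ C.p j = some i

def SeductionEnabled (G : SimpleGraph V) (C : Config V) (i : V) : Prop :=
  (C.m i = true ↔ PRmarried G C.p i) ∧ C.p i = none ∧
    (∀ k, G.Adj i k → C.p k ≠ some i) ∧
    ∃ j, G.Adj i j ∧ C.p j = none ∧ i < j ∧ C.m j = false

def AbandonmentEnabled (G : SimpleGraph V) (C : Config V) (i : V) : Prop :=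
  (C.m i = true ↔ PRmarried G C.p i) ∧
    ∃ j, G.Adj i j ∧ C.p i = some j ∧ C.p j ≠ some i ∧ (C.m j = true ∨ j ≤ i)

def Eligible (G : SimpleGraph V) (C : Config V) (i : V) : Prop :=
  UpdateEnabled G C i ∨ MarriageEnabled G C i ∨ SeductionEnabled G C i ∨ AbandonmentEnabled G C i

def Stable (G : SimpleGraph V) (C : Config V) : Prop := ∀ i, ¬ Eligible G C i

def Unchanged (C C' : Config V) (i : V) : Prop := C'.p i = C.p i ∧ C'.m i = C.m i

def DoesUpdate (G : SimpleGraph V) (C C' : Config V) (i : V) : Prop :=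
  UpdateEnabled G C i ∧ C'.p i = C.p i ∧ (C'.m i = true ↔ PRmarried G C.p i)

def DoesMarriageTo (G : SimpleGraph V) (C C' : Config V) (i j : V) : Prop :=
  MarriageEnabled G C i ∧ G.Adj i j ∧ C.p j = some i ∧ C'.p i = some j ∧ C'.m i = C.m i

def DoesSeductionTo (G : SimpleGraph V) (C C' : Config V) (i j : V) : Prop :=
  SeductionEnabled G C i ∧ G.Adj i j ∧ C.p j = none ∧ i < j ∧ C.m j = false ∧
    (∀ k, G.Adj i k → C.p k = none → i < k → C.m k = false → k ≤ j) ∧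
    C'.p i = some j ∧ C'.m i = C.m i

def DoesAbandonmentFrom (G : SimpleGraph V) (C C' : Config V) (i j : V) : Prop :=
  AbandonmentEnabled G C i ∧ C.p i = some j ∧ C'.p i = none ∧ C'.m i = C.m i

def Moves (G : SimpleGraph V) (C C' : Config V) (i : V) : Prop :=
  DoesUpdate G C C' i ∨ (∃ j, DoesMarriageTo G C C' i j) ∨
    (∃ j, DoesSeductionTo G C C' i j) ∨ (∃ j, DoesAbandonmentFrom G C C' i j)

def Step (G : SimpleGraph V) (C C' : Config V) : Prop :=
  (∃ i, Moves G C C' i) ∧ ∀ i, Moves G C C' i ∨ Unchanged C C' i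

def MSAMoveTo (G : SimpleGraph V) (C C' : Config V) (i j : V) : Prop :=
  DoesMarriageTo G C C' i j ∨ DoesSeductionTo G C C' i j ∨ DoesAbandonmentFrom G C C' i j

def IJMove (G : SimpleGraph V) (C C' : Config V) (i j : V) : Prop :=
  MSAMoveTo G C C' i j ∨ MSAMoveTo G C C' j i

end Rules


section TerminationProof

open Classical
open Finset

variable [LinearOrder V] {G : SimpleGraph V} {C C' : Config V}

lemma not_married_of_none {p : V → Option V} {i : V} (h : p i = none) :
    ¬ PRmarried G p i := by
  rintro ⟨j, -, hj, -⟩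
  rw [h] at hj
  exact Option.some_ne_none _ hj.symm

lemma not_married_of_points {i j : V} (hpj : C.p j = some i) (hpi : C.p i ≠ some j) :
    ¬ PRmarried G C.p j := by
  rintro ⟨w, -, hw, hw2⟩
  rw [hpj] at hw
  exact hpi (by rw [Option.some.inj hw]; exact hw2)

lemma step_cases (h : Step G C C') (i : V) :
    (C'.p i = C.p i ∧ (C'.m i = C.m i ∨ DoesUpdate G C C' i)) ∨
      (∃ j, DoesMarriageTo G C C' i j) ∨ (∃ j, DoesSeductionTo G C C' i j) ∨
      (∃ j, DoesAbandonmentFrom G C C' i j) := by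
  rcases h.2 i with (hU | hM | hS | hA) | hu
  · exact Or.inl ⟨hU.2.1, Or.inr hU⟩
  · exact Or.inr (Or.inl hM)
  · exact Or.inr (Or.inr (Or.inl hS))
  · exact Or.inr (Or.inr (Or.inr hA))
  · exact Or.inl ⟨hu.1, Or.inl hu.2⟩

lemma m_cases (h : Step G C C') (i : V) :
    C'.m i = C.m i ∨ (C'.m i = true ↔ PRmarried G C.p i) := by
  rcases step_cases h i with ⟨-, hm | hu⟩ | ⟨j, hj⟩ | ⟨j, hj⟩ | ⟨j, hj⟩
  · exact Or.inl hm
  · exact Or.inr hu.2.2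
  · exact Or.inl hj.2.2.2.2
  · exact Or.inl hj.2.2.2.2.2.2.2
  · exact Or.inl hj.2.2.2

lemma m_false_persist (h : Step G C C') {i : V} (hM : ¬ PRmarried G C.p i)
    (hm : C.m i ≠ true) : C'.m i ≠ true := by
  rcases m_cases h i with he | hu
  · rw [he]; exact hm
  · intro ht; exact hM (hu.mp ht)

lemma m_true_source (h : Step G C C') {i : V} (hm' : C'.m i = true) :
    C.m i = true ∨ PRmarried G C.p i := by
  rcases m_cases h i with he | hu
  · exact Or.inl (by rw [← he]; exact hm')
  · exact Or.inr (hu.mp hm')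

lemma p_persist_married (h : Step G C C') {i : V} (hM : PRmarried G C.p i) :
    C'.p i = C.p i := by
  obtain ⟨k, hadj, hpi, hpk⟩ := hM
  rcases step_cases h i with ⟨hp, -⟩ | ⟨j, hj⟩ | ⟨j, hj⟩ | ⟨j, hj⟩
  · exact hp
  · rw [hj.1.2.1] at hpi; exact absurd hpi (by simp)
  · rw [hj.1.2.1] at hpi; exact absurd hpi (by simp)
  · obtain ⟨-, j', -, hpij', hne, -⟩ := hj.1
    rw [hpi] at hpij'
    obtain rfl : k = j' := Option.some.inj hpij'
    exact absurd hpk hne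

lemma married_persist (h : Step G C C') {i : V} (hM : PRmarried G C.p i) :
    PRmarried G C'.p i := by
  obtain ⟨k, hadj, hpi, hpk⟩ := hM
  have h1 := p_persist_married h ⟨k, hadj, hpi, hpk⟩
  have h2 := p_persist_married h ⟨i, hadj.symm, hpk, hpi⟩
  exact ⟨k, hadj, by rw [h1, hpi], by rw [h2, hpk]⟩

lemma m_false_of_none {i : V} (hcorr : C.m i = true ↔ PRmarried G C.p i)
    (hp : C.p i = none) : C.m i = false := by
  have h1 : C.m i ≠ true := fun ht => not_married_of_none hp (hcorr.mp ht)
  simpa using h1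

lemma abandon_facts {i j : V} (hAb : DoesAbandonmentFrom G C C' i j) :
    G.Adj i j ∧ C.p j ≠ some i ∧ (C.m j = true ∨ j ≤ i) := by
  obtain ⟨⟨hcorr, j', hadj', hpij', hne', hcond'⟩, hpij, hp', -⟩ := hAb
  rw [hpij] at hpij'
  obtain rfl : j = j' := Option.some.inj hpij'
  exact ⟨hadj', hne', hcond'⟩

lemma marriage_partner (h : Step G C C') {i j : V} (hM : DoesMarriageTo G C C' i j) :
    C'.p j = some i ∨ (C'.p j = none ∧ C.m j = false ∧ i < j) := by
  have hpj : C.p j = some i := hM.2.2.1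
  have hpi : C.p i = none := hM.1.2.1
  have hmi : C.m i = false := m_false_of_none hM.1.1 hpi
  rcases step_cases h j with ⟨hp, -⟩ | ⟨k, hk⟩ | ⟨k, hk⟩ | ⟨k, hk⟩
  · exact Or.inl (by rw [hp, hpj])
  · rw [hk.1.2.1] at hpj; exact absurd hpj (by simp)
  · rw [hk.1.2.1] at hpj; exact absurd hpj (by simp)
  · obtain ⟨hadjk, hnek, hcondk⟩ := abandon_facts hk
    have hki : k = i := by
      have := hk.2.1
      rw [hpj] at this
      exact (Option.some.inj this).symm
    subst hki
    have hij : k ≤ j := by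
      rcases hcondk with hmt | hle
      · rw [hmi] at hmt; exact absurd hmt (by simp)
      · exact hle
    have hlt : k < j := lt_of_le_of_ne hij fun he => G.irrefl (he ▸ hadjk.symm)
    have hmj : C.m j = false := by
      have hnm : ¬ PRmarried G C.p j := not_married_of_points hpj (by rw [hpi]; simp)
      have : C.m j ≠ true := fun ht => hnm (hk.1.1.mp ht)
      simpa using this
    exact Or.inr ⟨hk.2.2.1, hmj, hlt⟩

lemma pointer_set (h : Step G C C') {i j : V} (hp' : C'.p i = some j)
    (hold : C.p i ≠ some j) :
    DoesMarriageTo G C C' i j ∨ DoesSeductionTo G C C' i j := by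
  rcases step_cases h i with ⟨hp, -⟩ | ⟨k, hk⟩ | ⟨k, hk⟩ | ⟨k, hk⟩
  · rw [hp] at hp'; exact absurd hp' hold
  · have hkj : k = j := by
      have := hk.2.2.2.1; rw [hp'] at this; exact (Option.some.inj this).symm
    subst hkj; exact Or.inl hk
  · have hkj : k = j := by
      have := hk.2.2.2.2.2.2.1; rw [hp'] at this; exact (Option.some.inj this).symm
    subst hkj; exact Or.inr hk
  · rw [hk.2.2.1] at hp'; exact absurd hp' (by simp)

lemma pointer_keep (h : Step G C C') {i j : V} (hp : C.p i = some j)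
    (hm : C.m j ≠ true) (hle : ¬ j ≤ i) : C'.p i = some j := by
  rcases step_cases h i with ⟨hpp, -⟩ | ⟨k, hk⟩ | ⟨k, hk⟩ | ⟨k, hk⟩
  · rw [hpp, hp]
  · rw [hk.1.2.1] at hp; exact absurd hp (by simp)
  · rw [hk.1.2.1] at hp; exact absurd hp (by simp)
  · obtain ⟨hadj', hne', hcond'⟩ := abandon_facts hk
    have hkj : k = j := by
      have := hk.2.1; rw [hp] at this; exact (Option.some.inj this).symm
    subst hkj
    rcases hcond' with ht | hl
    · exact absurd ht hm
    · exact absurd hl hle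

open Classical in
noncomputable def An (G : SimpleGraph V) (C : Config V) (i : V) : ℤ :=
  (if PRmarried G C.p i then 0 else 2) +
    (if C.m i = true ↔ PRmarried G C.p i then 0 else 1)

open Classical in
noncomputable def Bn (G : SimpleGraph V) (C : Config V) (i : V) : ℤ :=
  if C.m i = true ∧ ¬ PRmarried G C.p i then 1 else 0

open Classical in
noncomputable def Dn [LinearOrder V] (G : SimpleGraph V) (C : Config V) (i : V) : ℤ :=
  if (∃ j, C.p i = some j ∧ j < i) ∧ ¬ PRmarried G C.p i then 1 else 0

open Classical in
noncomputable def Ep [LinearOrder V] (G : SimpleGraph V) (C : Config V) (i j : V) : ℤ :=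
  if i < j ∧ G.Adj i j then
    (if PRmarried G C.p j then (if C.p i = some j then 1 else 0)
     else if C.m j = true then (if C.p i = some j then 3 else 2)
     else (if C.p i = some j then 3 else 4))
  else 0

lemma An_nonneg {i : V} : 0 ≤ An G C i := by
  unfold An; split_ifs <;> norm_num

lemma Bn_nonneg {i : V} : 0 ≤ Bn G C i := by
  unfold Bn; split_ifs <;> norm_num

lemma Dn_nonneg {i : V} : 0 ≤ Dn G C i := by
  unfold Dn; split_ifs <;> norm_num

lemma Ep_nonneg {i j : V} : 0 ≤ Ep G C i j := by
  unfold Ep; split_ifs <;> norm_num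

lemma Ep_le_four {i j : V} : Ep G C i j ≤ 4 := by
  unfold Ep; split_ifs <;> norm_num

lemma An_mono (h : Step G C C') (i : V) : An G C' i ≤ An G C i := by
  by_cases hM : PRmarried G C.p i
  · have hM' := married_persist h hM
    simp only [An, if_pos hM, if_pos hM']
    by_cases hc : C.m i = true ↔ PRmarried G C.p i
    · have hm : C.m i = true := hc.mpr hM
      have hm' : C'.m i = true := by
        rcases m_cases h i with he | hu
        · rw [he]; exact hm
        · exact hu.mpr hM
      rw [if_pos hc, if_pos (iff_of_true hm' hM')]
    · rw [if_neg hc]; split_ifs <;> norm_num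
  · by_cases hM' : PRmarried G C'.p i
    · simp only [An, if_pos hM', if_neg hM]
      split_ifs <;> norm_num
    · simp only [An, if_neg hM, if_neg hM']
      by_cases hc : C.m i = true ↔ PRmarried G C.p i
      · have hm : C.m i ≠ true := fun ht => hM (hc.mp ht)
        have hm' := m_false_persist h hM hm
        rw [if_pos hc, if_pos (iff_of_false hm' hM')]
      · rw [if_neg hc]; split_ifs <;> norm_num

lemma An_update (h : Step G C C') {i : V} (hu : DoesUpdate G C C' i) :
    An G C' i + 1 ≤ An G C i := by
  have hwrong : ¬ (C.m i = true ↔ PRmarried G C.p i) := hu.1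
  by_cases hM : PRmarried G C.p i
  · have hM' := married_persist h hM
    have hm' : C'.m i = true := hu.2.2.mpr hM
    simp only [An, if_pos hM, if_pos hM', if_pos (iff_of_true hm' hM'), if_neg hwrong]
    norm_num
  · have hm' : C'.m i ≠ true := fun ht => hM (hu.2.2.mp ht)
    by_cases hM' : PRmarried G C'.p i
    · simp only [An, if_pos hM', if_neg hM, if_neg hwrong,
        if_neg (show ¬ (C'.m i = true ↔ PRmarried G C'.p i) from
          fun hc => hm' (hc.mpr hM'))]
      norm_num
    · simp only [An, if_neg hM, if_neg hM', if_neg hwrong,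
        if_pos (iff_of_false hm' hM')]
      norm_num

lemma An_jump {i : V} (hM : ¬ PRmarried G C.p i) (hM' : PRmarried G C'.p i) :
    An G C' i + 1 ≤ An G C i := by
  simp only [An, if_neg hM, if_pos hM']
  split_ifs <;> norm_num

lemma Bn_mono (h : Step G C C') (i : V) : Bn G C' i ≤ Bn G C i := by
  unfold Bn
  by_cases hb' : C'.m i = true ∧ ¬ PRmarried G C'.p i
  · have hM : ¬ PRmarried G C.p i := fun hm => hb'.2 (married_persist h hm)
    have hm : C.m i = true := (m_true_source h hb'.1).resolve_right hM
    rw [if_pos hb', if_pos ⟨hm, hM⟩]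
  · rw [if_neg hb']; split_ifs <;> norm_num

lemma Bn_stale (h : Step G C C') {j : V} (hne : C'.m j ≠ C.m j)
    (hM' : ¬ PRmarried G C'.p j) : Bn G C' j + 1 ≤ Bn G C j := by
  have hM : ¬ PRmarried G C.p j := fun hm => hM' (married_persist h hm)
  rcases m_cases h j with he | hu
  · exact absurd he hne
  · have hm' : C'.m j ≠ true := fun ht => hM (hu.mp ht)
    have hm'f : C'.m j = false := by simpa using hm'
    have hm : C.m j = true := by
      cases hmc : C.m j with
      | false => exact absurd (by rw [hm'f, hmc]) hne
      | true => rfl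
    unfold Bn
    rw [if_neg (show ¬ (C'.m j = true ∧ ¬ PRmarried G C'.p j) from fun hb => hm' hb.1),
      if_pos ⟨hm, hM⟩]
    norm_num

lemma Dn_mono (h : Step G C C') (i : V) : Dn G C' i ≤ Dn G C i := by
  unfold Dn
  by_cases hd' : (∃ j, C'.p i = some j ∧ j < i) ∧ ¬ PRmarried G C'.p i
  · obtain ⟨⟨j, hpj, hji⟩, hM'⟩ := hd'
    have hM : ¬ PRmarried G C.p i := fun hm => hM' (married_persist h hm)
    have hpij : C.p i = some j := by
      by_contra hold
      rcases pointer_set h hpj hold with hMar | hSed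
      · rcases marriage_partner h hMar with hpj' | ⟨-, -, hij⟩
        · exact hM' ⟨j, hMar.2.1, hpj, hpj'⟩
        · exact absurd hij (not_lt.mpr hji.le)
      · exact absurd hSed.2.2.2.1 (not_lt.mpr hji.le)
    rw [if_pos ⟨⟨j, hpj, hji⟩, hM'⟩, if_pos ⟨⟨j, hpij, hji⟩, hM⟩]
  · rw [if_neg hd']; split_ifs <;> norm_num

lemma Ep_mono (h : Step G C C') (i j : V) :
    Ep G C' i j ≤ Ep G C i j + 2 * (Bn G C j - Bn G C' j) := by
  have hB := Bn_mono h j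
  by_cases hij : i < j ∧ G.Adj i j
  · by_cases hM' : PRmarried G C'.p j
    · by_cases hM : PRmarried G C.p j
      · by_cases hP : C.p i = some j
        · simp only [Ep, if_pos hij, if_pos hM, if_pos hM', if_pos hP]
          split_ifs <;> linarith
        · have hP' : ¬ C'.p i = some j := by
            intro hp'
            rcases pointer_set h hp' hP with hMar | hSed
            · obtain ⟨k, hadjk, hpjk, hpkj⟩ := hM
              have hpji : C.p j = some i := hMar.2.2.1
              rw [hpji] at hpjk
              exact hP (by rw [Option.some.inj hpjk]; exact hpkj)
            · obtain ⟨k, -, hpjk, -⟩ := hM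
              rw [hSed.2.2.1] at hpjk
              exact Option.some_ne_none _ hpjk.symm
          simp only [Ep, if_pos hij, if_pos hM, if_pos hM', if_neg hP, if_neg hP']
          linarith
      · simp only [Ep, if_pos hij, if_neg hM, if_pos hM']
        split_ifs <;> linarith
    · have hM : ¬ PRmarried G C.p j := fun hm => hM' (married_persist h hm)
      by_cases hm' : C'.m j = true
      · have hm : C.m j = true := (m_true_source h hm').resolve_right hM
        have key : C'.p i = some j → C.p i = some j := by
          intro hp'
          by_contra hP
          rcases pointer_set h hp' hP with hMar | hSed
          · rcases marriage_partner h hMar with hpj' | ⟨-, hmjf, -⟩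
            · exact hM' ⟨i, hij.2.symm, hpj', hp'⟩
            · rw [hmjf] at hm; exact Bool.noConfusion hm
          · have := hSed.2.2.2.2.1
            rw [this] at hm; exact Bool.noConfusion hm
        simp only [Ep, if_pos hij, if_neg hM, if_neg hM', if_pos hm, if_pos hm']
        by_cases hP' : C'.p i = some j
        · rw [if_pos hP', if_pos (key hP')]; linarith
        · rw [if_neg hP']; split_ifs <;> linarith
      · by_cases hm : C.m j = true
        · have h1 : Bn G C j = 1 := by unfold Bn; rw [if_pos ⟨hm, hM⟩]
          have h2 : Bn G C' j = 0 := by unfold Bn; rw [if_neg (fun hb => hm' hb.1)]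
          have hle4 : Ep G C' i j ≤ 4 := Ep_le_four
          have hge2 : 2 ≤ Ep G C i j := by
            simp only [Ep, if_pos hij, if_neg hM, if_pos hm]
            split_ifs <;> norm_num
          linarith
        · by_cases hP : C.p i = some j
          · have hP' : C'.p i = some j := pointer_keep h hP hm (not_le.mpr hij.1)
            simp only [Ep, if_pos hij, if_neg hM, if_neg hM', if_neg hm, if_neg hm',
              if_pos hP, if_pos hP']
            linarith
          · have hle4 : Ep G C' i j ≤ 4 := Ep_le_four
            have hge : Ep G C i j = 4 := by
              simp only [Ep, if_pos hij, if_neg hM, if_neg hm, if_neg hP]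
            linarith
  · simp only [Ep, if_neg hij]; linarith

lemma Ep_strict (h : Step G C C') {i j : V} (hij : i < j) (hadj : G.Adj i j)
    (hmove : MSAMoveTo G C C' i j)
    (hns : C'.m j = C.m j ∨ PRmarried G C'.p j) :
    Ep G C' i j + 1 ≤ Ep G C i j := by
  have hpair : i < j ∧ G.Adj i j := ⟨hij, hadj⟩
  rcases hmove with hMar | hSed | hAb
  · have hpj : C.p j = some i := hMar.2.2.1
    have hpi : C.p i = none := hMar.1.2.1
    have hP : ¬ C.p i = some j := by rw [hpi]; simp
    have hM : ¬ PRmarried G C.p j := not_married_of_points hpj (by rw [hpi]; simp)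
    rcases marriage_partner h hMar with hpj' | ⟨hpjn, hmjf, -⟩
    · have hM' : PRmarried G C'.p j := ⟨i, hadj.symm, hpj', hMar.2.2.2.1⟩
      have hE' : Ep G C' i j ≤ 1 := by
        simp only [Ep, if_pos hpair, if_pos hM']
        split_ifs <;> norm_num
      have hE : 2 ≤ Ep G C i j := by
        simp only [Ep, if_pos hpair, if_neg hM]
        split_ifs <;> norm_num
      linarith
    · have hM' : ¬ PRmarried G C'.p j := not_married_of_none hpjn
      have hm' : C'.m j ≠ true := m_false_persist h hM (by rw [hmjf]; simp)
      have hE' : Ep G C' i j ≤ 3 := by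
        simp only [Ep, if_pos hpair, if_neg hM', if_neg hm', if_pos hMar.2.2.2.1]
        norm_num
      have hE : Ep G C i j = 4 := by
        simp only [Ep, if_pos hpair, if_neg hM,
          if_neg (show ¬ C.m j = true by rw [hmjf]; simp), if_neg hP]
      linarith
  · have hpi : C.p i = none := hSed.1.2.1
    have hpjn : C.p j = none := hSed.2.2.1
    have hmj : C.m j = false := hSed.2.2.2.2.1
    have hM : ¬ PRmarried G C.p j := not_married_of_none hpjn
    have hE : Ep G C i j = 4 := by
      simp only [Ep, if_pos hpair, if_neg hM,
        if_neg (show ¬ C.m j = true by rw [hmj]; simp),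
        if_neg (show ¬ C.p i = some j by rw [hpi]; simp)]
    by_cases hM' : PRmarried G C'.p j
    · have hE' : Ep G C' i j ≤ 1 := by
        simp only [Ep, if_pos hpair, if_pos hM']
        split_ifs <;> norm_num
      linarith
    · have hm' : C'.m j ≠ true := m_false_persist h hM (by rw [hmj]; simp)
      have hE' : Ep G C' i j ≤ 3 := by
        simp only [Ep, if_pos hpair, if_neg hM', if_neg hm', if_pos hSed.2.2.2.2.2.2.1]
        norm_num
      linarith
  · have hpij : C.p i = some j := hAb.2.1
    have hp' : C'.p i = none := hAb.2.2.1
    have hP' : ¬ C'.p i = some j := by rw [hp']; simp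
    obtain ⟨-, hne', hcond'⟩ := abandon_facts hAb
    have hmj : C.m j = true := hcond'.resolve_right (not_le.mpr hij)
    by_cases hM : PRmarried G C.p j
    · have hM' := married_persist h hM
      have hE' : Ep G C' i j = 0 := by
        simp only [Ep, if_pos hpair, if_pos hM', if_neg hP']
      have hE : Ep G C i j = 1 := by
        simp only [Ep, if_pos hpair, if_pos hM, if_pos hpij]
      linarith
    · have hE : Ep G C i j = 3 := by
        simp only [Ep, if_pos hpair, if_neg hM, if_pos hmj, if_pos hpij]
      by_cases hM' : PRmarried G C'.p j
      · have hE' : Ep G C' i j = 0 := by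
          simp only [Ep, if_pos hpair, if_pos hM', if_neg hP']
        linarith
      · have hm' : C'.m j = true := by
          rcases hns with he | hm2
          · rw [he]; exact hmj
          · exact absurd hm2 hM'
        have hE' : Ep G C' i j = 2 := by
          simp only [Ep, if_pos hpair, if_neg hM', if_pos hm', if_neg hP']
        linarith

open Classical in
noncomputable def bucket [Fintype V] (G : SimpleGraph V) (C : Config V) (j : V) : ℤ :=
  An G C j + Dn G C j + (2 * (Fintype.card V : ℤ) + 1) * Bn G C j + ∑ i : V, Ep G C i j

variable [Fintype V]

lemma bucket_nonneg {j : V} : 0 ≤ bucket G C j := by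
  have hE : 0 ≤ ∑ i : V, Ep G C i j := Finset.sum_nonneg fun i _ => Ep_nonneg
  have hN : (0:ℤ) ≤ (Fintype.card V : ℤ) := by positivity
  have hKB : 0 ≤ (2 * (Fintype.card V : ℤ) + 1) * Bn G C j :=
    mul_nonneg (by linarith) Bn_nonneg
  have h1 : (0:ℤ) ≤ An G C j := An_nonneg
  have h2 : (0:ℤ) ≤ Dn G C j := Dn_nonneg
  unfold bucket
  linarith

lemma Esum_mono (h : Step G C C') (j : V) :
    ∑ i : V, Ep G C' i j ≤
      (∑ i : V, Ep G C i j) + (Fintype.card V : ℤ) * (2 * (Bn G C j - Bn G C' j)) := by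
  calc ∑ i : V, Ep G C' i j
      ≤ ∑ i : V, (Ep G C i j + 2 * (Bn G C j - Bn G C' j)) :=
        Finset.sum_le_sum fun i _ => Ep_mono h i j
    _ = (∑ i : V, Ep G C i j) + (Fintype.card V : ℤ) * (2 * (Bn G C j - Bn G C' j)) := by
        rw [Finset.sum_add_distrib, Finset.sum_const, Finset.card_univ, nsmul_eq_mul]

lemma bucket_mono (h : Step G C C') (j : V) : bucket G C' j ≤ bucket G C j := by
  have hA := An_mono h j
  have hD := Dn_mono h j
  have hB := Bn_mono h j
  have hE := Esum_mono h j
  unfold bucket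
  nlinarith [hA, hD, hB, hE]

lemma bucket_strict_of_update (h : Step G C C') {j : V} (hu : DoesUpdate G C C' j) :
    bucket G C' j + 1 ≤ bucket G C j := by
  have hA := An_update h hu
  have hD := Dn_mono h j
  have hB := Bn_mono h j
  have hE := Esum_mono h j
  unfold bucket
  nlinarith [hA, hD, hB, hE]

lemma bucket_strict_of_jump (h : Step G C C') {j : V}
    (hM : ¬ PRmarried G C.p j) (hM' : PRmarried G C'.p j) :
    bucket G C' j + 1 ≤ bucket G C j := by
  have hA := An_jump hM hM'
  have hD := Dn_mono h j
  have hB := Bn_mono h j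
  have hE := Esum_mono h j
  unfold bucket
  nlinarith [hA, hD, hB, hE]

lemma bucket_strict_of_stale (h : Step G C C') {j : V} (hne : C'.m j ≠ C.m j)
    (hM' : ¬ PRmarried G C'.p j) :
    bucket G C' j + 1 ≤ bucket G C j := by
  have hA := An_mono h j
  have hD := Dn_mono h j
  have hB := Bn_stale h hne hM'
  have hE := Esum_mono h j
  have hN : (0:ℤ) ≤ (Fintype.card V : ℤ) := by positivity
  unfold bucket
  nlinarith [hA, hD, hB, hE, hN]

lemma bucket_strict_of_Dn (h : Step G C C') {j : V}
    (hd : Dn G C' j + 1 ≤ Dn G C j) :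
    bucket G C' j + 1 ≤ bucket G C j := by
  have hA := An_mono h j
  have hB := Bn_mono h j
  have hE := Esum_mono h j
  unfold bucket
  nlinarith [hA, hd, hB, hE]

lemma bucket_strict_of_E (h : Step G C C') {i₀ j : V}
    (hstrict : Ep G C' i₀ j + 1 ≤ Ep G C i₀ j) :
    bucket G C' j + 1 ≤ bucket G C j := by
  have hA := An_mono h j
  have hD := Dn_mono h j
  have hB := Bn_mono h j
  have hE : ∑ i : V, Ep G C' i j <
      ∑ i : V, (Ep G C i j + 2 * (Bn G C j - Bn G C' j)) :=
    Finset.sum_lt_sum (fun i _ => Ep_mono h i j)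
      ⟨i₀, Finset.mem_univ i₀, by have := Bn_mono h j; linarith⟩
  have hE2 : ∑ i : V, (Ep G C i j + 2 * (Bn G C j - Bn G C' j)) =
      (∑ i : V, Ep G C i j) + (Fintype.card V : ℤ) * (2 * (Bn G C j - Bn G C' j)) := by
    rw [Finset.sum_add_distrib, Finset.sum_const, Finset.card_univ, nsmul_eq_mul]
  rw [hE2] at hE
  have hE3 : ∑ i : V, Ep G C' i j + 1 ≤
      (∑ i : V, Ep G C i j) + (Fintype.card V : ℤ) * (2 * (Bn G C j - Bn G C' j)) := hE
  unfold bucket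
  nlinarith [hA, hD, hB, hE3]

lemma step_decrease (h : Step G C C') :
    (∑ j : V, bucket G C' j) + 1 ≤ ∑ j : V, bucket G C j := by
  obtain ⟨i₀, hmove⟩ := h.1
  have hexists : ∃ j, bucket G C' j + 1 ≤ bucket G C j := by
    have hmsa : DoesUpdate G C C' i₀ ∨ ∃ j, MSAMoveTo G C C' i₀ j := by
      rcases hmove with hu | ⟨j, hj⟩ | ⟨j, hj⟩ | ⟨j, hj⟩
      · exact Or.inl hu
      · exact Or.inr ⟨j, Or.inl hj⟩
      · exact Or.inr ⟨j, Or.inr (Or.inl hj)⟩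
      · exact Or.inr ⟨j, Or.inr (Or.inr hj)⟩
    rcases hmsa with hu | ⟨j, hj⟩
    · exact ⟨i₀, bucket_strict_of_update h hu⟩
    · have hadj : G.Adj i₀ j := by
        rcases hj with hMar | hSed | hAb
        · exact hMar.2.1
        · exact hSed.2.1
        · exact (abandon_facts hAb).1
      by_cases hns : C'.m j = C.m j ∨ PRmarried G C'.p j
      · rcases lt_trichotomy i₀ j with hlt | heq | hgt
        · exact ⟨j, bucket_strict_of_E h (Ep_strict h hlt hadj hj hns)⟩
        · exact absurd (heq ▸ hadj) (G.irrefl)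
        · rcases hj with hMar | hSed | hAb
          · rcases marriage_partner h hMar with hpj' | ⟨-, -, hij⟩
            · have hM' : PRmarried G C'.p i₀ := ⟨j, hadj, hMar.2.2.2.1, hpj'⟩
              have hM : ¬ PRmarried G C.p i₀ := not_married_of_none hMar.1.2.1
              exact ⟨i₀, bucket_strict_of_jump h hM hM'⟩
            · exact absurd hij (not_lt.mpr hgt.le)
          · exact absurd hSed.2.2.2.1 (not_lt.mpr hgt.le)
          · obtain ⟨-, hne', -⟩ := abandon_facts hAb
            have hpij : C.p i₀ = some j := hAb.2.1
            have hM : ¬ PRmarried G C.p i₀ := by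
              rintro ⟨k, -, hk, hk2⟩
              rw [hpij] at hk
              obtain rfl : j = k := Option.some.inj hk
              exact hne' hk2
            have hd1 : Dn G C i₀ = 1 := by
              unfold Dn; rw [if_pos ⟨⟨j, hpij, hgt⟩, hM⟩]
            have hd0 : Dn G C' i₀ = 0 := by
              unfold Dn
              rw [if_neg]
              rintro ⟨⟨k, hk, -⟩, -⟩
              rw [hAb.2.2.1] at hk
              exact Option.some_ne_none _ hk.symm
            exact ⟨i₀, bucket_strict_of_Dn h (by rw [hd1, hd0]; norm_num)⟩
      · push_neg at hns
        exact ⟨j, bucket_strict_of_stale h hns.1 hns.2⟩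
  obtain ⟨j₀, hj₀⟩ := hexists
  have hlt : ∑ j : V, bucket G C' j < ∑ j : V, bucket G C j :=
    Finset.sum_lt_sum (fun j _ => bucket_mono h j) ⟨j₀, Finset.mem_univ j₀, by linarith⟩
  linarith

end TerminationProof

theorem no_infinite_execution [Fintype V] [LinearOrder V] (G : SimpleGraph V) :
    ¬ ∃ C : ℕ → Config V, Valid G (C 0) ∧ ∀ t, Step G (C t) (C (t+1)) := by
  rintro ⟨C, -, hstep⟩
  set Φ : ℕ → ℤ := fun t => ∑ j : V, bucket G (C t) j with hΦ
  have hdec : ∀ t, Φ (t + 1) + 1 ≤ Φ t := fun t => step_decrease (hstep t)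
  have hnn : ∀ t, 0 ≤ Φ t := fun t => Finset.sum_nonneg fun j _ => bucket_nonneg
  have key : ∀ n : ℕ, Φ n + n ≤ Φ 0 := by
    intro n
    induction n with
    | zero => simp
    | succ k ih =>
      have h1 := hdec k
      push_cast
      push_cast at ih
      linarith
  have h2 := key ((Φ 0).toNat + 1)
  have h3 : ((Φ 0).toNat : ℤ) = Φ 0 := Int.toNat_of_nonneg (hnn 0)
  have h4 := hnn ((Φ 0).toNat + 1)
  push_cast at h2
  rw [h3] at h2
  linarith
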